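/- Suppose a BPRE (Z_n) (the conditioned A-parasite process along a random cell line) satisfies the Geiger–Kersting–Vatutin asymptotics P(Z_n > 0) ~ c n^{-3/2} ρ^n with ρ := inf_{0≤θ≤1} E g'_{Λ₁}(1)^θ and c ∈ (0,∞). If νρ = 1, then E[#G*_n(A)] = ν^n P(Z_n > 0) → 0 as n → ∞, and hence (via Fatou and the extinction–explosion dichotomy) P(Ext(A)) = 1. -/

import Mathlib

open Filter MeasureTheory

/-- weakly subcritical case.  Suppose the BPRE `(Z_n)` (on `Ω'`) satisfies the
Geiger–Kersting–Vatutin asymptotics `P'(Z_n > 0) ~ c n^{-3/2} ρ^n` with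
`ρ = inf_{0≤θ≤1} E g'_{Λ₁}(1)^θ`, `c > 0`, and `ν ρ = 1`.  Then, via the identity
`E[#G*_n(A)] = ν^n P'(Z_n > 0)`, the expected number of contaminated `A`-cells tends to `0`,
and hence (Fatou plus the extinction–explosion dichotomy) `P(Ext(A)) = 1`. -/
theorem stmt15 {Ω Ω' : Type*} [MeasurableSpace Ω] [MeasurableSpace Ω']
    (P : Measure Ω) [IsProbabilityMeasure P] (P' : Measure Ω') [IsProbabilityMeasure P']
    (GstarA : ℕ → Ω → ℕ) (Z : ℕ → Ω' → ℕ) (ν ρ c : ℝ)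
    (hν : 1 ≤ ν) (hρ : 0 < ρ) (hc : 0 < c) (hνρ : ν * ρ = 1)
    (hint : ∀ n, Integrable (fun ω => (GstarA n ω : ℝ)) P)
    (hE : ∀ n, ∫ ω, (GstarA n ω : ℝ) ∂P = ν ^ n * (P' {ω' | 0 < Z n ω'}).toReal)
    (hasymp : Tendsto
      (fun n : ℕ => (P' {ω' | 0 < Z n ω'}).toReal / (c * (n : ℝ) ^ (-(3 : ℝ) / 2) * ρ ^ n))
      atTop (nhds 1))
    (hdich : ∀ᵐ ω ∂P, (∃ N, ∀ n ≥ N, GstarA n ω = 0) ∨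
      Tendsto (fun n => GstarA n ω) atTop atTop) :
    Tendsto (fun n => ∫ ω, (GstarA n ω : ℝ) ∂P) atTop (nhds 0) ∧
      ∀ᵐ ω ∂P, ∃ N, ∀ n ≥ N, GstarA n ω = 0 := by
  set f : ℕ → ℝ := fun n => (P' {ω' | 0 < Z n ω'}).toReal with hf
  set x : ℕ → ℝ := fun n => (n : ℝ) ^ (-(3 : ℝ) / 2) with hx
  -- x n → 0
  have hx0 : Tendsto x atTop (nhds 0) := by
    have : Tendsto (fun t : ℝ => t ^ (-(3 : ℝ) / 2)) atTop (nhds 0) := by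
      have := tendsto_rpow_neg_atTop (y := (3 : ℝ) / 2) (by norm_num)
      simpa [neg_div] using this
    exact this.comp tendsto_natCast_atTop_atTop
  have hcx0 : Tendsto (fun n => c * x n) atTop (nhds 0) := by
    simpa using hx0.const_mul c
  have hprod : Tendsto (fun n => (f n / (c * x n * ρ ^ n)) * (c * x n)) atTop (nhds 0) := by
    simpa using hasymp.mul hcx0
  have key : Tendsto (fun n => ν ^ n * f n) atTop (nhds 0) := by
    refine hprod.congr' ?_
    filter_upwards [eventually_ge_atTop 1] with n hn
    have hxpos : 0 < x n := by
      apply Real.rpow_pos_of_pos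
      exact_mod_cast Nat.pos_of_ne_zero (by omega)
    have hρn : (ρ : ℝ) ^ n ≠ 0 := (pow_pos hρ n).ne'
    have hνn : ν ^ n * ρ ^ n = 1 := by
      rw [← mul_pow, hνρ, one_pow]
    have hcx : c * x n ≠ 0 := by positivity
    have hν' : ν ^ n = 1 / ρ ^ n := by rw [eq_div_iff hρn]; exact hνn
    have hkey : f n / (c * x n * ρ ^ n) * (c * x n) = f n / ρ ^ n := by
      rw [mul_comm (c * x n) (ρ ^ n), ← div_div, div_mul_cancel₀ _ hcx]
    rw [hkey, hν']
    ring
  constructor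
  · refine key.congr' ?_
    filter_upwards with n
    rw [hE n]
  · -- Fatou argument
    set F : ℕ → Ω → ENNReal := fun n ω => (GstarA n ω : ENNReal) with hF
    have hmeas : ∀ n, AEMeasurable (F n) P := by
      intro n
      have h1 : AEMeasurable (fun ω => (GstarA n ω : ℝ)) P := (hint n).aemeasurable
      have h2 : AEMeasurable (fun ω => ENNReal.ofReal ((GstarA n ω : ℝ))) P :=
        ENNReal.measurable_ofReal.comp_aemeasurable h1
      refine h2.congr ?_
      filter_upwards with ω
      simp [hF, ENNReal.ofReal_natCast]
    -- lintegral of F n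
    have hlin : ∀ n, ∫⁻ ω, F n ω ∂P = ENNReal.ofReal (∫ ω, (GstarA n ω : ℝ) ∂P) := by
      intro n
      rw [MeasureTheory.ofReal_integral_eq_lintegral_ofReal (hint n)
        (by filter_upwards with ω; positivity)]
      congr 1
      ext ω
      simp [hF, ENNReal.ofReal_natCast]
    have hlin0 : Tendsto (fun n => ∫⁻ ω, F n ω ∂P) atTop (nhds 0) := by
      have h0 : Tendsto (fun n => ∫ ω, (GstarA n ω : ℝ) ∂P) atTop (nhds 0) := by
        refine key.congr' ?_
        filter_upwards with n
        rw [hE n]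
      have := (ENNReal.continuous_ofReal.tendsto 0).comp h0
      simpa [hlin, Function.comp_def] using this
    -- Fatou
    have hfatou : ∫⁻ ω, liminf (fun n => F n ω) atTop ∂P = 0 := by
      have h1 := MeasureTheory.lintegral_liminf_le' hmeas (μ := P) (u := atTop)
      have h2 : liminf (fun n => ∫⁻ ω, F n ω ∂P) atTop = 0 := hlin0.liminf_eq
      exact le_antisymm (h2 ▸ h1) zero_le
    -- AEMeasurability of the liminf
    have hmliminf : AEMeasurable (fun ω => liminf (fun n => F n ω) atTop) P := by
      have hae : ∀ᵐ ω ∂P, ∀ n, F n ω = (hmeas n).mk (F n) ω :=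
        MeasureTheory.ae_all_iff.mpr fun n => (hmeas n).ae_eq_mk
      refine (Measurable.liminf (f := fun n => (hmeas n).mk (F n))
        (fun n => (hmeas n).measurable_mk)).aemeasurable.congr ?_
      filter_upwards [hae] with ω hω
      simp only [funext fun n => (hω n).symm]
    have hlim0 : ∀ᵐ ω ∂P, liminf (fun n => F n ω) atTop = 0 :=
      (MeasureTheory.lintegral_eq_zero_iff' hmliminf).mp hfatou
    filter_upwards [hdich, hlim0] with ω hω h0
    rcases hω with h | h
    · exact h
    · exfalso
      have : (1 : ENNReal) ≤ liminf (fun n => F n ω) atTop := by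
        refine le_liminf_of_le (by isBoundedDefault) ?_
        filter_upwards [h.eventually_ge_atTop 1] with n hn
        show (1 : ENNReal) ≤ (GstarA n ω : ENNReal)
        exact_mod_cast hn
      rw [h0] at this
      exact (by norm_num : ¬ ((1 : ENNReal) ≤ 0)) this
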